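/- Let S₁,...,S_{d+1} be a colourful configuration on the unit sphere in ℝ^d in general position with the origin in its core. Then every point v of the configuration is a vertex of at least one colourful simplex containing the origin; equivalently, the D-depth of the antipode -v (for D the set of the other d colours) is at least 1. -/

import Mathlib

/-- Points are in general position if every subset of at most d+1 of them is
affinely independent. -/
def GeneralPosition (d : ℕ) (P : Set (EuclideanSpace ℝ (Fin d))) : Prop :=
  ∀ t : Finset (EuclideanSpace ℝ (Fin d)), ↑t ⊆ P → t.card ≤ d + 1 →
    AffineIndependent ℝ (fun v : ↥t => (v : EuclideanSpace ℝ (Fin d)))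

open Metric RealInnerProductSpace

attribute [local instance] Classical.propDecidable

section auxgen

variable {E : Type*} [NormedAddCommGroup E] [InnerProductSpace ℝ E]

private lemma aux_dist0 (a : E) : dist (0 : E) a = ‖a‖ := by
  rw [dist_comm, dist_zero_right]

private lemma aux_halfspace {F : Set E} (h0 : (0 : E) ∈ convexHull ℝ F) (p : E) :
    ∃ y ∈ F, ⟪p, y⟫ ≤ 0 := by
  by_contra hc
  push_neg at hc
  have hlin : IsLinearMap ℝ (fun z : E => ⟪p, z⟫) :=
    ⟨fun x y => by simp [inner_add_right], fun c x => by simp [real_inner_smul_right]⟩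
  have hsub : convexHull ℝ F ⊆ {z : E | 0 < ⟪p, z⟫} :=
    convexHull_min (fun y hy => hc y hy) (convex_halfSpace_gt hlin 0)
  have h2 := hsub h0
  simp at h2

private lemma aux_inner_ge {K : Set E} (hK : Convex ℝ K) {p w : E} (hp : p ∈ K) (hw : w ∈ K)
    (hmin : ∀ z ∈ K, ‖p‖ ≤ ‖z‖) : ‖p‖ ^ 2 ≤ ⟪p, w⟫ := by
  by_contra hc
  push_neg at hc
  have hT0 : ⟪p, w - p⟫ < 0 := by
    rw [inner_sub_right, real_inner_self_eq_norm_sq]; linarith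
  set T := ⟪p, w - p⟫ with hTdef
  set C := ‖w - p‖ ^ 2 with hCdef
  have hC : 0 ≤ C := by positivity
  set s := min 1 (-T / (C + 1)) with hsdef
  have hs0 : 0 < s := lt_min one_pos (div_pos (by linarith) (by linarith))
  have hs1 : s ≤ 1 := min_le_left _ _
  have hzK : (1 - s) • p + s • w ∈ K := hK hp hw (by linarith) hs0.le (by ring)
  have hre : (1 - s) • p + s • w = p + s • (w - p) := by
    rw [smul_sub, sub_smul, one_smul]; abel
  rw [hre] at hzK
  have hn : ‖p‖ ≤ ‖p + s • (w - p)‖ := hmin _ hzK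
  have hsq : ‖p + s • (w - p)‖ ^ 2 = ‖p‖ ^ 2 + 2 * (s * T) + s ^ 2 * C := by
    rw [norm_add_sq_real, real_inner_smul_right, norm_smul, Real.norm_eq_abs,
      abs_of_pos hs0, mul_pow]
  have hkey : 0 ≤ 2 * (s * T) + s ^ 2 * C := by
    nlinarith [norm_nonneg p, norm_nonneg (p + s • (w - p))]
  have hs2 : s * (C + 1) ≤ -T := by
    have h1 : s ≤ -T / (C + 1) := min_le_right _ _
    have h2 : (0:ℝ) < C + 1 := by linarith
    calc s * (C + 1) ≤ (-T / (C + 1)) * (C + 1) := by nlinarith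
    _ = -T := by field_simp
  have h3 : s * C ≤ -T - s := by nlinarith
  have h4 : s ^ 2 * C ≤ s * (-T - s) := by nlinarith [mul_le_mul_of_nonneg_left h3 hs0.le]
  nlinarith [mul_pos hs0 hs0, mul_neg_of_pos_of_neg hs0 hT0]

private lemma aux_scale {B : Set E} (hB : B.Nonempty) {v : E} {ε : ℝ} (hε : 0 < ε)
    (h : (0 : E) ∈ convexHull ℝ (insert (ε • v) B)) :
    (0 : E) ∈ convexHull ℝ (insert v B) := by
  rw [convexHull_insert hB, mem_convexJoin] at h ⊢
  obtain ⟨x, hx, z, hz, hseg⟩ := h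
  rw [Set.mem_singleton_iff] at hx
  subst hx
  obtain ⟨a, b, ha, hb, hab, heq⟩ := hseg
  have hD0 : 0 ≤ a * ε + b := add_nonneg (mul_nonneg ha hε.le) hb
  have hD : 0 < a * ε + b := by
    rcases hD0.lt_or_eq with h' | h'
    · exact h'
    · exfalso
      have h2 := (add_eq_zero_iff_of_nonneg (mul_nonneg ha hε.le) hb).1 h'.symm
      have ha0 : a = 0 := by
        rcases mul_eq_zero.1 h2.1 with h'' | h''
        · exact h''
        · exact absurd h'' hε.ne'
      rw [ha0, h2.2] at hab; norm_num at hab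
  refine ⟨v, Set.mem_singleton _, z, hz,
    a * ε / (a * ε + b), b / (a * ε + b), by positivity, by positivity, ?_, ?_⟩
  · field_simp
  · have hmain : (a * ε / (a * ε + b)) • v + (b / (a * ε + b)) • z
        = (1 / (a * ε + b)) • (a • (ε • v) + b • z) := by
      rw [smul_add, smul_smul, smul_smul, smul_smul]
      ring_nf
    rw [hmain, heq, smul_zero]

end auxgen

private noncomputable def auxB (d : ℕ) (S : Fin (d + 1) → Fin (d + 1) → EuclideanSpace ℝ (Fin d))
    (i : Fin (d + 1)) (t : Fin (d + 1) → Fin (d + 1)) : Finset (EuclideanSpace ℝ (Fin d)) :=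
  (Finset.univ.erase i).image (fun j => S j (t j))

private lemma auxB_nonempty (d : ℕ) (S : Fin (d + 1) → Fin (d + 1) → EuclideanSpace ℝ (Fin d))
    (i : Fin (d + 1)) (hd : 0 < d) (t : Fin (d + 1) → Fin (d + 1)) :
    (auxB d S i t).Nonempty := by
  simp only [auxB]
  apply Finset.Nonempty.image
  rw [← Finset.card_pos, Finset.card_erase_of_mem (Finset.mem_univ i), Finset.card_univ,
    Fintype.card_fin]
  omega

private lemma aux_notin (d : ℕ) (S : Fin (d + 1) → Fin (d + 1) → EuclideanSpace ℝ (Fin d))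
    (i k : Fin (d + 1))
    (hcon : ∀ t : Fin (d + 1) → Fin (d + 1), t i = k →
      (0 : EuclideanSpace ℝ (Fin d)) ∉ convexHull ℝ (Set.range fun j => S j (t j)))
    (t : Fin (d + 1) → Fin (d + 1)) :
    (0 : EuclideanSpace ℝ (Fin d)) ∉
      convexHull ℝ (insert (S i k) (↑(auxB d S i t) : Set (EuclideanSpace ℝ (Fin d)))) := by
  intro h0
  apply hcon (Function.update t i k) (Function.update_self i k t)
  refine convexHull_mono ?_ h0
  intro x hx
  rcases hx with rfl | hx
  · exact ⟨i, by simp⟩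
  · simp only [Finset.mem_coe, auxB, Finset.mem_image] at hx
    obtain ⟨j, hj, rfl⟩ := hx
    have hji : j ≠ i := (Finset.mem_erase.1 hj).1
    exact ⟨j, by simp [Function.update_of_ne hji]⟩

set_option maxHeartbeats 1000000 in
private lemma aux_key (d : ℕ) (S : Fin (d + 1) → Fin (d + 1) → EuclideanSpace ℝ (Fin d))
    (i k : Fin (d + 1))
    (hsphere : ∀ i j, ‖S i j‖ = 1)
    (hcore : ∀ i, (0 : EuclideanSpace ℝ (Fin d)) ∈ convexHull ℝ (Set.range (S i)))
    (hcon : ∀ t : Fin (d + 1) → Fin (d + 1), t i = k →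
      (0 : EuclideanSpace ℝ (Fin d)) ∉ convexHull ℝ (Set.range fun j => S j (t j)))
    (hd : 0 < d) {ε : ℝ} (hε : 0 < ε) :
    ∃ t : Fin (d + 1) → Fin (d + 1),
      Metric.infDist 0 (convexHull ℝ (↑(auxB d S i t) : Set (EuclideanSpace ℝ (Fin d)))) ≤ ε := by
  set v := S i k with hvdef
  have hv1 : ‖v‖ = 1 := hsphere i k
  obtain ⟨t₀, ht₀⟩ := Finite.exists_min
    (fun t : Fin (d + 1) → Fin (d + 1) =>
      Metric.infDist 0 (convexHull ℝ
        (insert (ε • v) (↑(auxB d S i t) : Set (EuclideanSpace ℝ (Fin d))))))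
  set K : Set (EuclideanSpace ℝ (Fin d)) :=
    convexHull ℝ (insert (ε • v) (↑(auxB d S i t₀) : Set (EuclideanSpace ℝ (Fin d)))) with hKdef
  have hKco : Convex ℝ K := convex_convexHull ℝ _
  have hKcompact : IsCompact K :=
    (((auxB d S i t₀).finite_toSet).insert (ε • v)).isCompact_convexHull ℝ
  have hKne : K.Nonempty := ⟨ε • v, subset_convexHull ℝ _ (Set.mem_insert _ _)⟩
  obtain ⟨p, hpK, hpdist⟩ := hKcompact.exists_infDist_eq_dist hKne 0
  have hnormp : Metric.infDist 0 K = ‖p‖ := by rw [hpdist, aux_dist0]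
  have hmin : ∀ z ∈ K, ‖p‖ ≤ ‖z‖ := by
    intro z hz
    rw [← hnormp, ← aux_dist0 z]
    exact Metric.infDist_le_dist_of_mem hz
  have hδε : ‖p‖ ≤ ε := by
    have h1 : Metric.infDist 0 K ≤ dist 0 (ε • v) :=
      Metric.infDist_le_dist_of_mem (subset_convexHull ℝ _ (Set.mem_insert _ _))
    rw [hnormp, aux_dist0, norm_smul, hv1, Real.norm_eq_abs, abs_of_pos hε, mul_one] at h1
    exact h1
  by_cases hp0 : ‖p‖ ≤ 0
  · exfalso
    have hpz : p = 0 := norm_eq_zero.1 (le_antisymm hp0 (norm_nonneg p))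
    apply aux_notin d S i k hcon t₀
    exact aux_scale (Finset.coe_nonempty.2 (auxB_nonempty d S i hd t₀)) hε (hpz ▸ hpK)
  push_neg at hp0
  have hgen' : ∀ w ∈ K, ‖p‖ ^ 2 ≤ ⟪p, w⟫ := fun w hw => aux_inner_ge hKco hpK hw hmin
  -- Caratheodory
  have hpK2 := hpK
  rw [hKdef, convexHull_eq_union] at hpK2
  simp only [Set.mem_iUnion] at hpK2
  obtain ⟨W, hWsub, hWaff, hpW⟩ := hpK2
  rw [Finset.convexHull_eq] at hpW
  obtain ⟨μ, hμ0, hμ1, hμc⟩ := hpW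
  set W' : Finset (EuclideanSpace ℝ (Fin d)) := W.filter (fun w => μ w ≠ 0) with hW'def
  have hW'sub : W' ⊆ W := Finset.filter_subset _ _
  have hμ1' : ∑ w ∈ W', μ w = 1 := by rw [hW'def, Finset.sum_filter_ne_zero]; exact hμ1
  have hcm : W'.centerMass μ id = p := by rw [hW'def, Finset.centerMass_filter_ne_zero]; exact hμc
  have hpW' : p ∈ convexHull ℝ (↑W' : Set (EuclideanSpace ℝ (Fin d))) := by
    rw [← hcm]
    exact Finset.centerMass_mem_convexHull W' (fun w hw => hμ0 w (hW'sub hw))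
      (by rw [hμ1']; norm_num) (fun w hw => Finset.mem_coe.2 hw)
  have hWK : ∀ w ∈ W', w ∈ K :=
    fun w hw => subset_convexHull ℝ _ (hWsub (Finset.mem_coe.2 (hW'sub hw)))
  have htight : ∀ w ∈ W', ⟪p, w⟫ = ‖p‖ ^ 2 := by
    have hsumrep : p = ∑ w ∈ W', μ w • w := by
      rw [← hcm, Finset.centerMass_eq_of_sum_1 _ _ hμ1']
      simp
    have hps : ⟪p, p⟫ = ∑ w ∈ W', μ w * ⟪p, w⟫ := by
      have hinner : ⟪p, (∑ w ∈ W', μ w • w : EuclideanSpace ℝ (Fin d))⟫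
          = ∑ w ∈ W', μ w * ⟪p, w⟫ := by
        rw [inner_sum]
        exact Finset.sum_congr rfl fun w _ => real_inner_smul_right _ _ _
      rw [← hsumrep] at hinner
      exact hinner
    have hsum : ∑ w ∈ W', μ w * (⟪p, w⟫ - ‖p‖ ^ 2) = 0 := by
      have hexp : ∑ w ∈ W', μ w * (⟪p, w⟫ - ‖p‖ ^ 2)
          = (∑ w ∈ W', μ w * ⟪p, w⟫) - (∑ w ∈ W', μ w) * ‖p‖ ^ 2 := by
        rw [Finset.sum_mul, ← Finset.sum_sub_distrib]
        congr 1; ext w; ring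
      rw [hexp, ← hps, hμ1', real_inner_self_eq_norm_sq]; ring
    intro w hw
    have hz := (Finset.sum_eq_zero_iff_of_nonneg (fun x hx =>
      mul_nonneg (hμ0 x (hW'sub hx)) (sub_nonneg.2 (hgen' x (hWK x hx))))).1 hsum w hw
    have h2 : ⟪p, w⟫ - ‖p‖ ^ 2 = 0 := by
      rcases mul_eq_zero.1 hz with h | h
      · exact absurd h (Finset.mem_filter.1 hw).2
      · exact h
    linarith
  -- cardinality bound
  have hne' : W'.Nonempty := by
    rcases W'.eq_empty_or_nonempty with h | h
    · rw [h] at hpW'; simp at hpW'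
    · exact h
  have hWcard : W'.card ≤ d := by
    have hW'aff : AffineIndependent ℝ ((↑) : {x // x ∈ W'} → EuclideanSpace ℝ (Fin d)) := by
      exact hWaff.comp_embedding
        (⟨fun x : {x // x ∈ W'} => (⟨x.1, hW'sub x.2⟩ : {x // x ∈ W}), by
          intro a b h
          simp only [Subtype.mk.injEq] at h
          exact Subtype.ext h⟩ : {x // x ∈ W'} ↪ {x // x ∈ W})
    have hcardW' : Fintype.card {x // x ∈ W'} = (W'.card - 1) + 1 := by
      rw [Fintype.card_coe]
      have := Finset.card_pos.2 hne'
      omega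
    have hfr := hW'aff.finrank_vectorSpan hcardW'
    have hrangeW' : Set.range ((↑) : {x // x ∈ W'} → EuclideanSpace ℝ (Fin d))
        = (↑W' : Set (EuclideanSpace ℝ (Fin d))) := by
      ext x; simp
    rw [hrangeW'] at hfr
    set f : EuclideanSpace ℝ (Fin d) →ₗ[ℝ] ℝ :=
      { toFun := fun z => ⟪p, z⟫
        map_add' := fun x y => inner_add_right _ _ _
        map_smul' := fun c x => by
          simp only [RingHom.id_apply, smul_eq_mul]
          exact real_inner_smul_right p x c } with hfdef
    have hker : vectorSpan ℝ (↑W' : Set (EuclideanSpace ℝ (Fin d))) ≤ LinearMap.ker f := by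
      rw [vectorSpan_def, Submodule.span_le]
      rintro x hx
      rw [Set.mem_vsub] at hx
      obtain ⟨a, ha, b, hb, rfl⟩ := hx
      have hfx : f (a -ᵥ b) = 0 := by
        rw [vsub_eq_sub]
        show ⟪p, a - b⟫ = 0
        rw [inner_sub_right, htight a (Finset.mem_coe.1 ha), htight b (Finset.mem_coe.1 hb)]
        ring
      simpa [LinearMap.mem_ker] using hfx
    have hrank := LinearMap.finrank_range_add_finrank_ker f
    rw [finrank_euclideanSpace_fin] at hrank
    have hrange_ne : LinearMap.range f ≠ ⊥ := by
      intro hbot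
      have hfp : f p = 0 := by
        have hm : f p ∈ LinearMap.range f := LinearMap.mem_range_self f p
        rw [hbot, Submodule.mem_bot] at hm; exact hm
      have hpp : ⟪p, p⟫ = 0 := hfp
      rw [real_inner_self_eq_norm_sq] at hpp
      nlinarith
    have h1le : 0 < Module.finrank ℝ (LinearMap.range f) :=
      Module.finrank_pos_iff.2 (Submodule.nontrivial_iff_ne_bot.2 hrange_ne)
    have hle1 : Module.finrank ℝ (LinearMap.range f) ≤ 1 := by
      have hh := Submodule.finrank_le (LinearMap.range f)
      simpa using hh
    have hmono := Submodule.finrank_mono hker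
    rw [hfr] at hmono
    have := Finset.card_pos.2 hne'
    omega
  -- case split
  by_cases hcaseA : ∃ j₀ ∈ Finset.univ.erase i, ∀ w ∈ W',
      w ∈ insert (ε • v) (((Finset.univ.erase i).erase j₀).image (fun j => S j (t₀ j)))
  · exfalso
    obtain ⟨j₀, hj₀mem, hWsub'⟩ := hcaseA
    have hj₀i : j₀ ≠ i := (Finset.mem_erase.1 hj₀mem).1
    obtain ⟨y, hymem, hy⟩ := aux_halfspace (hcore j₀) p
    obtain ⟨m, rfl⟩ := hymem
    set t' := Function.update t₀ j₀ m with ht'def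
    set K' : Set (EuclideanSpace ℝ (Fin d)) :=
      convexHull ℝ (insert (ε • v) (↑(auxB d S i t') : Set (EuclideanSpace ℝ (Fin d)))) with hK'def
    have hsubA' : (↑(insert (ε • v)
          (((Finset.univ.erase i).erase j₀).image (fun j => S j (t₀ j)))) :
            Set (EuclideanSpace ℝ (Fin d)))
        ⊆ insert (ε • v) (↑(auxB d S i t') : Set (EuclideanSpace ℝ (Fin d))) := by
      intro x hx
      rw [Finset.coe_insert] at hx
      rcases hx with rfl | hx
      · exact Set.mem_insert _ _
      · rw [Finset.mem_coe, Finset.mem_image] at hx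
        obtain ⟨j, hj, rfl⟩ := hx
        have hjj₀ : j ≠ j₀ := (Finset.mem_erase.1 hj).1
        have hjmem : j ∈ Finset.univ.erase i := (Finset.mem_erase.1 hj).2
        apply Set.mem_insert_of_mem
        simp only [Finset.mem_coe, auxB, Finset.mem_image]
        exact ⟨j, hjmem, by rw [ht'def, Function.update_of_ne hjj₀]⟩
    have hpA' : p ∈ K' := by
      rw [hK'def]
      apply convexHull_mono hsubA'
      refine convexHull_mono ?_ hpW'
      intro w hw
      exact Finset.mem_coe.2 (hWsub' w (Finset.mem_coe.1 hw))
    have hyA' : S j₀ m ∈ K' := by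
      apply subset_convexHull
      apply Set.mem_insert_of_mem
      simp only [Finset.mem_coe, auxB, Finset.mem_image]
      exact ⟨j₀, hj₀mem, by rw [ht'def, Function.update_self]⟩
    set C := ‖S j₀ m - p‖ ^ 2 with hCdef
    have hC0 : 0 ≤ C := by positivity
    set s := ‖p‖ ^ 2 / (C + ‖p‖ ^ 2 + 1) with hsdef
    have hden : (0:ℝ) < C + ‖p‖ ^ 2 + 1 := by positivity
    have hs0 : 0 < s := div_pos (by positivity) hden
    have hs1 : s < 1 := by
      rw [hsdef, div_lt_one hden]; nlinarith
    have hzK' : (1 - s) • p + s • (S j₀ m) ∈ K' :=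
      (convex_convexHull ℝ _) hpA' hyA' (by linarith) hs0.le (by ring)
    have hnormz : ‖(1 - s) • p + s • (S j₀ m)‖ < ‖p‖ := by
      have hre : (1 - s) • p + s • (S j₀ m) = p + s • (S j₀ m - p) := by
        rw [smul_sub, sub_smul, one_smul]; abel
      rw [hre]
      have h1 : ‖p + s • (S j₀ m - p)‖ ^ 2
          = ‖p‖ ^ 2 + 2 * (s * ⟪p, S j₀ m - p⟫) + s ^ 2 * C := by
        rw [norm_add_sq_real, real_inner_smul_right, norm_smul, Real.norm_eq_abs,
          abs_of_pos hs0, mul_pow]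
      have h2 : ⟪p, S j₀ m - p⟫ ≤ -‖p‖ ^ 2 := by
        rw [inner_sub_right, real_inner_self_eq_norm_sq]; linarith
      have h3 : s * C < ‖p‖ ^ 2 := by
        rw [hsdef, div_mul_eq_mul_div, div_lt_iff₀ hden]; nlinarith
      have h4 : ‖p + s • (S j₀ m - p)‖ ^ 2 < ‖p‖ ^ 2 := by nlinarith
      nlinarith [norm_nonneg (p + s • (S j₀ m - p))]
    have hlt : Metric.infDist 0 K' < Metric.infDist 0 K := by
      have hle : Metric.infDist 0 K' ≤ ‖(1 - s) • p + s • (S j₀ m)‖ := by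
        rw [← aux_dist0 ((1 - s) • p + s • (S j₀ m))]
        exact Metric.infDist_le_dist_of_mem hzK'
      rw [hnormp]
      linarith
    exact absurd (ht₀ t') (not_le.2 hlt)
  · push_neg at hcaseA
    have hjprop : ∀ j₀ ∈ Finset.univ.erase i, S j₀ (t₀ j₀) ∈ W' ∧
        ∀ j ∈ Finset.univ.erase i, j ≠ j₀ → S j₀ (t₀ j₀) ≠ S j (t₀ j) := by
      intro j₀ hj₀
      obtain ⟨w, hwW', hwnot⟩ := hcaseA j₀ hj₀
      have hwA : w ∈ insert (ε • v) (↑(auxB d S i t₀) : Set (EuclideanSpace ℝ (Fin d))) :=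
        hWsub (Finset.mem_coe.2 (hW'sub hwW'))
      rw [Set.mem_insert_iff] at hwA
      rcases hwA with hwv | hwB
      · exact absurd (by rw [hwv]; exact Finset.mem_insert_self _ _) hwnot
      · simp only [Finset.mem_coe, auxB, Finset.mem_image] at hwB
        obtain ⟨j, hj, hwj⟩ := hwB
        by_cases hjj₀ : j = j₀
        · subst hjj₀
          constructor
          · rw [hwj]; exact hwW'
          · intro j' hj' hne heq
            apply hwnot
            apply Finset.mem_insert_of_mem
            rw [Finset.mem_image]
            refine ⟨j', Finset.mem_erase.2 ⟨hne, hj'⟩, ?_⟩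
            rw [← heq]; exact hwj
        · exact absurd (Finset.mem_insert_of_mem (Finset.mem_image.2
            ⟨j, Finset.mem_erase.2 ⟨hjj₀, hj⟩, hwj⟩)) hwnot
    have hinj : Set.InjOn (fun j => S j (t₀ j)) ↑(Finset.univ.erase i) := by
      intro j₁ h₁ j₂ h₂ heq
      by_contra hne
      exact (hjprop j₁ (Finset.mem_coe.1 h₁)).2 j₂ (Finset.mem_coe.1 h₂)
        (fun hh => hne hh.symm) heq
    have hcard_er : (Finset.univ.erase i).card = d := by
      rw [Finset.card_erase_of_mem (Finset.mem_univ i), Finset.card_univ, Fintype.card_fin]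
      omega
    have hdle : d ≤ W'.card := by
      have hcc := Finset.card_le_card_of_injOn (fun j => S j (t₀ j))
        (fun j hj => (hjprop j hj).1) hinj
      rw [hcard_er] at hcc
      exact hcc
    have himg : (Finset.univ.erase i).image (fun j => S j (t₀ j)) = W' := by
      apply Finset.eq_of_subset_of_card_le
      · intro x hx
        rw [Finset.mem_image] at hx
        obtain ⟨j, hj, rfl⟩ := hx
        exact (hjprop j hj).1
      · rw [Finset.card_image_of_injOn hinj, hcard_er]
        exact hWcard
    refine ⟨t₀, ?_⟩
    have hBW : auxB d S i t₀ = W' := himg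
    have hpB : p ∈ convexHull ℝ (↑(auxB d S i t₀) : Set (EuclideanSpace ℝ (Fin d))) := by
      rw [hBW]; exact hpW'
    calc Metric.infDist 0 (convexHull ℝ (↑(auxB d S i t₀) : Set (EuclideanSpace ℝ (Fin d))))
        ≤ dist 0 p := Metric.infDist_le_dist_of_mem hpB
    _ = ‖p‖ := aux_dist0 p
    _ ≤ ε := hδε

/-- Bárány: in a colourful configuration on the unit sphere with the origin in
its core, every configuration point is a vertex of at least one colourful
simplex containing the origin. -/
theorem every_point_in_a_colourful_simplex (d : ℕ)
    (S : Fin (d + 1) → Fin (d + 1) → EuclideanSpace ℝ (Fin d))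
    (hsphere : ∀ i j, ‖S i j‖ = 1)
    (hgen : GeneralPosition d (⋃ i, Set.range (S i)))
    (hcore : ∀ i, (0 : EuclideanSpace ℝ (Fin d)) ∈ convexHull ℝ (Set.range (S i))) :
    ∀ i k, ∃ t : Fin (d + 1) → Fin (d + 1), t i = k ∧
      (0 : EuclideanSpace ℝ (Fin d)) ∈ convexHull ℝ (Set.range fun j => S j (t j)) := by
  intro i k
  by_contra hcon
  push_neg at hcon
  rcases Nat.eq_zero_or_pos d with hd0 | hdpos
  · subst hd0
    have h1 := hsphere i k
    have h0 : S i k = 0 := Subsingleton.elim _ _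
    rw [h0, norm_zero] at h1
    norm_num at h1
  obtain ⟨t₁, ht₁⟩ := Finite.exists_min
    (fun t : Fin (d + 1) → Fin (d + 1) =>
      Metric.infDist 0 (convexHull ℝ (↑(auxB d S i t) : Set (EuclideanSpace ℝ (Fin d)))))
  have hle0 : Metric.infDist 0
      (convexHull ℝ (↑(auxB d S i t₁) : Set (EuclideanSpace ℝ (Fin d)))) ≤ 0 := by
    by_contra hpos
    push_neg at hpos
    obtain ⟨t₂, ht₂⟩ := aux_key d S i k hsphere hcore hcon hdpos (half_pos hpos)
    have h3 := ht₁ t₂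
    linarith
  have heq0 : Metric.infDist 0
      (convexHull ℝ (↑(auxB d S i t₁) : Set (EuclideanSpace ℝ (Fin d)))) = 0 :=
    le_antisymm hle0 Metric.infDist_nonneg
  have hcomp : IsCompact (convexHull ℝ (↑(auxB d S i t₁) : Set (EuclideanSpace ℝ (Fin d)))) :=
    (auxB d S i t₁).finite_toSet.isCompact_convexHull ℝ
  obtain ⟨x₀, hx₀⟩ := auxB_nonempty d S i hdpos t₁
  have hne : (convexHull ℝ (↑(auxB d S i t₁) : Set (EuclideanSpace ℝ (Fin d)))).Nonempty :=
    ⟨x₀, subset_convexHull ℝ _ (Finset.mem_coe.2 hx₀)⟩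
  obtain ⟨q, hq, hdq⟩ := hcomp.exists_infDist_eq_dist hne 0
  rw [heq0] at hdq
  have hq0 : q = 0 := by
    have := dist_eq_zero.1 hdq.symm
    exact this.symm
  apply aux_notin d S i k hcon t₁
  exact convexHull_mono (Set.subset_insert _ _) (hq0 ▸ hq)
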